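/- arXiv:2406.10463 — 2 statements merged into one kernel-verified Lean document; each statement's English description precedes it below -/
import Mathlib

section
/- For every standard finite tree T and every finite set B ⊆ ω₁ \ {0} with ht[T] ⊆ B, there exists a standard finite tree U which is a simple extension of T with ht[U] = B. -/
noncomputable section
open scoped Classical

namespace AKST

/-- The first uncountable ordinal. -/
def ω1 : Ordinal := (Cardinal.aleph 1).ord

/-- The second uncountable ordinal. -/
def ω2 : Ordinal := (Cardinal.aleph 2).ord

/-- The height of a countable ordinal `γ`: the unique `α` with `ω·α ≤ γ < ω·(α+1)`. -/
def ht (γ : Ordinal) : Ordinal := γ / Ordinal.omega0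

/-- A standard finite tree. -/
structure SFT where
  elems : Finset Ordinal
  lt : Ordinal → Ordinal → Prop
  zero_mem : 0 ∈ elems
  mem_ok : ∀ x ∈ elems, x = 0 ∨ (Ordinal.omega0 ≤ x ∧ x < ω1)
  lt_mem : ∀ {x y}, lt x y → x ∈ elems ∧ y ∈ elems
  lt_trans' : ∀ {x y z}, lt x y → lt y z → lt x z
  lt_irrefl' : ∀ x, ¬ lt x x
  pred_linear : ∀ {x y z}, lt y x → lt z x → lt y z ∨ y = z ∨ lt z y
  lt_ht : ∀ {x y}, lt x y → ht x < ht y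
  pred_level : ∀ x ∈ elems, ∀ α, (∃ z ∈ elems, ht z = α) → α < ht x →
    ∃ y ∈ elems, ht y = α ∧ lt y x

namespace SFT

/-- The non-strict tree order. -/
def le (T : SFT) (x y : Ordinal) : Prop := T.lt x y ∨ (x = y ∧ x ∈ T.elems)

/-- `ht[T]`: the set of nonzero heights of elements of `T`. -/
def heights (T : SFT) : Set Ordinal := {α | α ≠ 0 ∧ ∃ x ∈ T.elems, ht x = α}

/-- Level `α` of `T`. -/
def level (T : SFT) (α : Ordinal) : Set Ordinal := {x | x ∈ T.elems ∧ ht x = α}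

/-- `max(ht[T])`. -/
def maxHeight (T : SFT) : Ordinal := sSup T.heights

/-- The least element of `ht[T]` greater than `α`. -/
def minAbove (T : SFT) (α : Ordinal) : Ordinal := sInf {β | β ∈ T.heights ∧ α < β}

/-- The drop-down `x↾α`: the unique element of `T` of height `α` below `x`. -/
def drop (T : SFT) (α x : Ordinal) : Ordinal :=
  if h : ∃ y, y ∈ T.elems ∧ ht y = α ∧ T.lt y x then h.choose else 0

/-- `z` is the meet of `x` and `y` in `T`. -/
def isMeet (T : SFT) (x y z : Ordinal) : Prop :=
  T.le z x ∧ T.le z y ∧ ∀ w, T.le w x → T.le w y → T.le w z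

/-- The meet `x ∧_T y`. -/
def meet (T : SFT) (x y : Ordinal) : Ordinal :=
  if h : ∃ z, T.isMeet x y z then h.choose else 0

/-- `U` extends `T`. -/
def Ext (T U : SFT) : Prop :=
  (↑T.elems : Set Ordinal) ⊆ ↑U.elems ∧ ∀ {x y}, T.lt x y → U.lt x y

/-- `X` has unique drop-downs to `α` in `T`. -/
def UniqueDrops (T : SFT) (α : Ordinal) (X : Set Ordinal) : Prop :=
  ∀ x ∈ X, ∀ y ∈ X, T.drop α x = T.drop α y → x = y

/-- `U` is a simple extension of `T`. -/
def SimpleExt (U T : SFT) : Prop :=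
  Ext T U ∧
  (∀ x ∈ U.elems, x ∉ T.elems → ht x ∉ T.heights) ∧
  (∀ α, α ∈ U.heights → α ∉ T.heights → α < T.maxHeight →
     U.UniqueDrops α (T.level (T.minAbove α)))

/-- `x` and `y` are incomparable in `T`. -/
def Incomp (T : SFT) (x y : Ordinal) : Prop := x ≠ y ∧ ¬ T.lt x y ∧ ¬ T.lt y x

/-- `T` is normal: every element has successors at every higher occupied level. -/
def Normal (T : SFT) : Prop :=
  ∀ x ∈ T.elems, ∀ γ ∈ T.heights, ht x < γ → ∃ y ∈ T.elems, ht y = γ ∧ T.lt x y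

end SFT

/-! Partial functions on a tree, represented by their graphs. -/

def dom (f : Set (Ordinal × Ordinal)) : Set Ordinal := {x | ∃ y, (x, y) ∈ f}

def ran (f : Set (Ordinal × Ordinal)) : Set Ordinal := {y | ∃ x, (x, y) ∈ f}

/-- The graph is single-valued. -/
def FuncGraph (f : Set (Ordinal × Ordinal)) : Prop :=
  ∀ {x y y'}, (x, y) ∈ f → (x, y') ∈ f → y = y'

/-- The graph is injective. -/
def InjGraph (f : Set (Ordinal × Ordinal)) : Prop :=
  ∀ {x x' y}, (x, y) ∈ f → (x', y) ∈ f → x = x'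

/-- The graph is a partial function from `T` to `T`. -/
def Carr (T : SFT) (f : Set (Ordinal × Ordinal)) : Prop :=
  ∀ p ∈ f, p.1 ∈ T.elems ∧ p.2 ∈ T.elems

/-- Strictly increasing. -/
def StrictIncr (T : SFT) (f : Set (Ordinal × Ordinal)) : Prop :=
  ∀ {x y x' y'}, (x, y) ∈ f → (x', y') ∈ f → T.lt x x' → T.lt y y'

/-- Level preserving. -/
def LevelPres (f : Set (Ordinal × Ordinal)) : Prop :=
  ∀ p ∈ f, ht p.1 = ht p.2

/-- Downwards closed (the domain is closed under drop-downs). -/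
def DownClosedDom (T : SFT) (f : Set (Ordinal × Ordinal)) : Prop :=
  ∀ x y, (x, y) ∈ f → ∀ β ∈ T.heights, β < ht x →
    ∃ x' y', x' ∈ T.elems ∧ ht x' = β ∧ T.lt x' x ∧ (x', y') ∈ f

/-- No fixed points other than 0. -/
def NoFix (f : Set (Ordinal × Ordinal)) : Prop := ∀ x, (x, x) ∈ f → x = 0

/-- `f` is a standard function on `T`. -/
def IsStdFun (T : SFT) (f : Set (Ordinal × Ordinal)) : Prop :=
  Carr T f ∧ FuncGraph f ∧ InjGraph f ∧ StrictIncr T f ∧ LevelPres f ∧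
    DownClosedDom T f ∧ NoFix f

/-- `f^m(x) = y`, for `m ∈ {-1, 1}`. -/
def appPow (f : Set (Ordinal × Ordinal)) (m : ℤ) (x y : Ordinal) : Prop :=
  (m = 1 ∧ (x, y) ∈ f) ∨ (m = -1 ∧ (y, x) ∈ f)

/-- `X↾α` and `X` are `f`-consistent. -/
def Consistent (T : SFT) (f : Set (Ordinal × Ordinal)) (α : Ordinal) (X : Set Ordinal) : Prop :=
  ∀ x ∈ X, ∀ y ∈ X, ((T.drop α x, T.drop α y) ∈ f ↔ (x, y) ∈ f)

/-- The family `{F τ : τ ∈ A}` is separated on the tuple `a 0, ..., a (n-1)`. -/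
def SepOnTuple (F : Ordinal → Set (Ordinal × Ordinal)) (A : Finset Ordinal)
    (n : ℕ) (a : ℕ → Ordinal) : Prop :=
  ∀ i < n, ∀ j₀ < i, ∀ j₁ < i, ∀ m₀ m₁ : ℤ, ∀ τ₀ ∈ A, ∀ τ₁ ∈ A,
    (m₀ = 1 ∨ m₀ = -1) → (m₁ = 1 ∨ m₁ = -1) →
    appPow (F τ₀) m₀ (a i) (a j₀) → appPow (F τ₁) m₁ (a i) (a j₁) →
    j₀ = j₁ ∧ m₀ = m₁ ∧ τ₀ = τ₁

/-- The family is separated on the set `X`. -/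
def SepOnSet (F : Ordinal → Set (Ordinal × Ordinal)) (A : Finset Ordinal)
    (X : Set Ordinal) : Prop :=
  ∃ (n : ℕ) (a : ℕ → Ordinal), (∀ i < n, ∀ j < n, a i = a j → i = j) ∧
    X = a '' {i | i < n} ∧ SepOnTuple F A n a

/-- The family is `ρ`-separated on the tuple `a 0, ..., a (n-1)` (of elements of level `α`). -/
def RhoSepOnTuple (ρ : Ordinal → Ordinal → Ordinal) (F : Ordinal → Set (Ordinal × Ordinal))
    (A : Finset Ordinal) (α : Ordinal) (n : ℕ) (a : ℕ → Ordinal) : Prop :=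
  ∀ i < n, ∀ j₀ < i, ∀ j₁ < i, ∀ m₀ m₁ : ℤ, ∀ τ₀ ∈ A, ∀ τ₁ ∈ A,
    (m₀ = 1 ∨ m₀ = -1) → (m₁ = 1 ∨ m₁ = -1) →
    appPow (F τ₀) m₀ (a i) (a j₀) → appPow (F τ₁) m₁ (a i) (a j₁) →
    j₀ = j₁ ∧ ((m₀ = m₁ ∧ τ₀ = τ₁) ∨ α ≤ ρ τ₀ τ₁)

/-- The family is `ρ`-separated on the set `X ⊆ T_α`. -/
def RhoSepOnSet (ρ : Ordinal → Ordinal → Ordinal) (F : Ordinal → Set (Ordinal × Ordinal))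
    (A : Finset Ordinal) (α : Ordinal) (X : Set Ordinal) : Prop :=
  ∃ (n : ℕ) (a : ℕ → Ordinal), (∀ i < n, ∀ j < n, a i = a j → i = j) ∧
    X = a '' {i | i < n} ∧ RhoSepOnTuple ρ F A α n a

/-- There is a loop in `X` with respect to the family `{F τ : τ ∈ A}`. -/
def HasLoop (F : Ordinal → Set (Ordinal × Ordinal)) (A : Finset Ordinal)
    (X : Set Ordinal) : Prop :=
  ∃ p : ℕ, 4 ≤ p ∧ ∃ c : ℕ → Ordinal,
    (∀ i < p, c i ∈ X) ∧
    (∀ i < p - 1, ∀ j < p - 1, c i = c j → i = j) ∧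
    c 0 = c (p - 1) ∧
    (∀ i < p - 1, ∃ τ ∈ A, ∃ m : ℤ, (m = 1 ∨ m = -1) ∧ appPow (F τ) m (c i) (c (i + 1)))

/-- `p` is a member of `T ⊗ T`. -/
def InOtimes (T : SFT) (p : Ordinal × Ordinal) : Prop :=
  p.1 ∈ T.elems ∧ p.2 ∈ T.elems ∧ ht p.1 = ht p.2

/-- `f ⊆ T ⊗ T` is downwards closed as a subset of `T ⊗ T`. -/
def DCPairs (T : SFT) (f : Set (Ordinal × Ordinal)) : Prop :=
  ∀ p ∈ f, ∀ q, InOtimes T q → T.le q.1 p.1 → T.le q.2 p.2 → q ∈ f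

/-- The downward closure of `f` in `U`. -/
def dcl (U : SFT) (f : Set (Ordinal × Ordinal)) : Set (Ordinal × Ordinal) :=
  {p | InOtimes U p ∧ ∃ q ∈ f, U.le p.1 q.1 ∧ U.le p.2 q.2}

end AKST

open AKST AKST.SFT

namespace AKST

lemma ht_zero' : ht 0 = 0 := Ordinal.zero_div _

lemma ht_mul_add (β : Ordinal) (n : ℕ) : ht (Ordinal.omega0 * β + n) = β := by
  unfold ht
  rw [Ordinal.mul_add_div _ Ordinal.omega0_ne_zero,
    Ordinal.div_eq_zero_of_lt (Ordinal.nat_lt_omega0 n), add_zero]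

lemma mul_add_lt_ω1 {β : Ordinal} (hβ : β < ω1) (n : ℕ) :
    Ordinal.omega0 * β + n < ω1 := by
  rw [ω1, Cardinal.lt_ord, Ordinal.card_add, Ordinal.card_mul, Ordinal.card_omega0,
    Ordinal.card_nat]
  exact Cardinal.add_lt_of_lt Cardinal.aleph0_lt_aleph_one.le
    (Cardinal.mul_lt_of_lt Cardinal.aleph0_lt_aleph_one.le Cardinal.aleph0_lt_aleph_one
      (by rwa [ω1, Cardinal.lt_ord] at hβ))
    ((Cardinal.nat_lt_aleph0 n).trans Cardinal.aleph0_lt_aleph_one)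

lemma omega0_le_mul_add {β : Ordinal} (hβ : β ≠ 0) (n : ℕ) :
    Ordinal.omega0 ≤ Ordinal.omega0 * β + n := by
  refine le_trans ?_ le_self_add
  conv_lhs => rw [← mul_one Ordinal.omega0]
  exact mul_le_mul_right (Ordinal.one_le_iff_ne_zero.2 hβ) _

lemma mul_add_ne_zero {β : Ordinal} (hβ : β ≠ 0) (n : ℕ) :
    Ordinal.omega0 * β + n ≠ 0 :=
  fun h => by
    have := omega0_le_mul_add hβ n
    rw [h] at this
    exact absurd this (not_le.2 Ordinal.omega0_pos)

namespace SFT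

variable {T : SFT}

lemma ht_mem_heights {x : Ordinal} (hx : x ∈ T.elems) (hx0 : x ≠ 0) : ht x ∈ T.heights := by
  rcases T.mem_ok x hx with rfl | ⟨hω, _⟩
  · exact absurd rfl hx0
  · refine ⟨?_, x, hx, rfl⟩
    have h1 : 1 ≤ ht x := by
      rw [ht, Ordinal.le_div Ordinal.omega0_ne_zero, mul_one]; exact hω
    exact (lt_of_lt_of_le zero_lt_one h1).ne'

lemma ht_cases {x : Ordinal} (hx : x ∈ T.elems) : ht x = 0 ∨ ht x ∈ T.heights := by
  by_cases h : x = 0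
  · subst h; exact Or.inl ht_zero'
  · exact Or.inr (ht_mem_heights hx h)

lemma heights_finite (T : SFT) : T.heights.Finite :=
  (T.elems.finite_toSet.image ht).subset (fun α hα => ⟨hα.2.choose, hα.2.choose_spec.1, hα.2.choose_spec.2⟩)

lemma le_maxHeight {γ : Ordinal} (h : γ ∈ T.heights) : γ ≤ T.maxHeight :=
  le_csSup T.heights_finite.bddAbove h

lemma exists_gt_of_lt_maxHeight {α : Ordinal} (h : α < T.maxHeight) :
    ∃ γ ∈ T.heights, α < γ := by
  by_contra hc
  push_neg at hc
  rcases Set.eq_empty_or_nonempty T.heights with he | hne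
  · rw [maxHeight, he, csSup_empty] at h
    exact absurd h (by simp)
  · exact absurd h (not_lt.2 (csSup_le hne hc))

lemma maxHeight_le {β : Ordinal} (h : ∀ γ ∈ T.heights, γ ≤ β) : T.maxHeight ≤ β := by
  rcases Set.eq_empty_or_nonempty T.heights with he | hne
  · rw [maxHeight, he, csSup_empty]; exact bot_le
  · exact csSup_le hne h

lemma minAbove_spec {α : Ordinal} (h : ∃ γ ∈ T.heights, α < γ) :
    T.minAbove α ∈ T.heights ∧ α < T.minAbove α := by
  have hne : {β | β ∈ T.heights ∧ α < β}.Nonempty := by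
    obtain ⟨γ, h1, h2⟩ := h; exact ⟨γ, h1, h2⟩
  exact csInf_mem hne

lemma minAbove_le {α γ : Ordinal} (h1 : γ ∈ T.heights) (h2 : α < γ) : T.minAbove α ≤ γ :=
  csInf_le (OrderBot.bddBelow _) ⟨h1, h2⟩

lemma lt_eq_of_ht_eq {x y z : Ordinal} (hy : T.lt y x) (hz : T.lt z x) (h : ht y = ht z) :
    y = z := by
  rcases T.pred_linear hy hz with h' | h' | h'
  · exact absurd (T.lt_ht h') (by rw [h]; exact lt_irrefl _)
  · exact h'
  · exact absurd (T.lt_ht h') (by rw [h]; exact lt_irrefl _)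

lemma drop_eq {α x y : Ordinal} (hy : y ∈ T.elems) (hht : ht y = α) (hlt : T.lt y x) :
    T.drop α x = y := by
  have h : ∃ z, z ∈ T.elems ∧ ht z = α ∧ T.lt z x := ⟨y, hy, hht, hlt⟩
  rw [drop, dif_pos h]
  exact lt_eq_of_ht_eq h.choose_spec.2.2 hlt (by rw [h.choose_spec.2.1, hht])

lemma simpleExt_refl (T : SFT) : SimpleExt T T :=
  ⟨⟨subset_rfl, fun h => h⟩, fun _ hx hx' => absurd hx hx', fun _ h h' _ => absurd h h'⟩

end SFT

end AKST
namespace AKST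
namespace SFT

variable {T : SFT}

/-- The new element inserted below `t`. -/
def newElem (T : SFT) (β t : Ordinal) : Ordinal :=
  Ordinal.omega0 * β + (T.elems.sort (·≤·)).idxOf t

/-- Level `minAbove β` of `T`, as a finset. -/
def levA (T : SFT) (β : Ordinal) : Finset Ordinal :=
  T.elems.filter (fun t => ht t = T.minAbove β)

def elemsA (T : SFT) (β : Ordinal) : Finset Ordinal :=
  T.elems ∪ (T.levA β).image (T.newElem β)

def ltA (T : SFT) (β : Ordinal) (x y : Ordinal) : Prop :=
  T.lt x y ∨ (∃ t ∈ T.levA β, x = T.newElem β t ∧ (t = y ∨ T.lt t y)) ∨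
    (∃ t ∈ T.levA β, y = T.newElem β t ∧ T.lt x t)

lemma ht_newElem (β t : Ordinal) : ht (T.newElem β t) = β := ht_mul_add β _

lemma newElem_not_mem {β : Ordinal} (hβ0 : β ≠ 0) (hβT : β ∉ T.heights) (t : Ordinal) :
    T.newElem β t ∉ T.elems := by
  intro h
  exact hβT (ht_newElem β t ▸ ht_mem_heights h (mul_add_ne_zero hβ0 _))

lemma newElem_inj {β t t' : Ordinal} (ht1 : t ∈ T.elems) (ht2 : t' ∈ T.elems)
    (h : T.newElem β t = T.newElem β t') : t = t' := by
  unfold newElem at h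
  have h2 : ((T.elems.sort (·≤·)).idxOf t : Ordinal) = (T.elems.sort (·≤·)).idxOf t' :=
    by rwa [add_right_inj] at h
  have h3 : (T.elems.sort (·≤·)).idxOf t = (T.elems.sort (·≤·)).idxOf t' := by
    exact_mod_cast h2
  have m1 : t ∈ T.elems.sort (·≤·) := (Finset.mem_sort _).2 ht1
  have m2 : t' ∈ T.elems.sort (·≤·) := (Finset.mem_sort _).2 ht2
  calc t = (T.elems.sort (·≤·))[(T.elems.sort (·≤·)).idxOf t]'(List.idxOf_lt_length_iff.2 m1) :=
        (List.getElem_idxOf _).symm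
    _ = (T.elems.sort (·≤·))[(T.elems.sort (·≤·)).idxOf t']'(List.idxOf_lt_length_iff.2 m2) := by
        simp_rw [h3]
    _ = t' := List.getElem_idxOf _

lemma mem_levA {β t : Ordinal} : t ∈ T.levA β ↔ t ∈ T.elems ∧ ht t = T.minAbove β :=
  Finset.mem_filter

lemma stepA (T : SFT) {β : Ordinal} (hβ0 : β ≠ 0) (hβ1 : β < ω1) (hβT : β ∉ T.heights)
    (hcase : ∃ γ ∈ T.heights, β < γ) :
    ∃ T' : SFT, SimpleExt T' T ∧ T'.heights = T.heights ∪ {β} := by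
  have hν := minAbove_spec hcase
  have hβν : β < T.minAbove β := hν.2
  have hnm : ∀ s, T.newElem β s ∉ T.elems := newElem_not_mem hβ0 hβT
  have hF1 : ∀ t ∈ T.levA β, ∀ x, T.lt x t → ht x < β := by
    intro t htl x hxt
    have hx : x ∈ T.elems := (T.lt_mem hxt).1
    have hlt : ht x < T.minAbove β := (mem_levA.1 htl).2 ▸ T.lt_ht hxt
    rcases ht_cases hx with h0 | hh
    · rw [h0]; exact pos_iff_ne_zero.2 hβ0
    · rcases lt_trichotomy (ht x) β with h | h | h
      · exact h
      · exact absurd (h ▸ hh) hβT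
      · exact absurd hlt (not_lt.2 (minAbove_le hh h))
  refine ⟨{ elems := T.elemsA β
            lt := T.ltA β
            zero_mem := Finset.mem_union_left _ T.zero_mem
            mem_ok := ?_
            lt_mem := ?_
            lt_trans' := ?_
            lt_irrefl' := ?_
            pred_linear := ?_
            lt_ht := ?_
            pred_level := ?_ }, ?_, ?_⟩
  · -- mem_ok
    intro x hx
    rcases Finset.mem_union.1 hx with h | h
    · exact T.mem_ok x h
    · obtain ⟨t, _, rfl⟩ := Finset.mem_image.1 h
      exact Or.inr ⟨omega0_le_mul_add hβ0 _, mul_add_lt_ω1 hβ1 _⟩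
  · -- lt_mem
    intro x y h
    rcases h with h | ⟨t, htl, rfl, h⟩ | ⟨t, htl, rfl, h⟩
    · exact ⟨Finset.mem_union_left _ (T.lt_mem h).1, Finset.mem_union_left _ (T.lt_mem h).2⟩
    · refine ⟨Finset.mem_union_right _ (Finset.mem_image_of_mem _ htl), ?_⟩
      rcases h with rfl | h
      · exact Finset.mem_union_left _ (mem_levA.1 htl).1
      · exact Finset.mem_union_left _ (T.lt_mem h).2
    · exact ⟨Finset.mem_union_left _ (T.lt_mem h).1,
        Finset.mem_union_right _ (Finset.mem_image_of_mem _ htl)⟩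
  · -- lt_trans'
    intro x y z h1 h2
    rcases h1 with h1 | ⟨t, htl, rfl, h1⟩ | ⟨t, htl, hy, h1⟩
    · rcases h2 with h2 | ⟨t, htl, rfl, h2⟩ | ⟨t, htl, rfl, h2⟩
      · exact Or.inl (T.lt_trans' h1 h2)
      · exact absurd (T.lt_mem h1).2 (hnm t)
      · exact Or.inr (Or.inr ⟨t, htl, rfl, T.lt_trans' h1 h2⟩)
    · rcases h2 with h2 | ⟨t', htl', rfl, h2⟩ | ⟨t', htl', rfl, h2⟩
      · refine Or.inr (Or.inl ⟨t, htl, rfl, Or.inr ?_⟩)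
        rcases h1 with rfl | h1
        · exact h2
        · exact T.lt_trans' h1 h2
      · rcases h1 with rfl | h1
        · exact absurd (mem_levA.1 htl).1 (hnm t')
        · exact absurd (T.lt_mem h1).2 (hnm t')
      · exfalso
        have hν1 : ht t = T.minAbove β := (mem_levA.1 htl).2
        have hν2 : ht t' = T.minAbove β := (mem_levA.1 htl').2
        have hy2 : ht y < T.minAbove β := hν2 ▸ T.lt_ht h2
        rcases h1 with rfl | h1
        · rw [hν1] at hy2; exact lt_irrefl _ hy2
        · exact absurd hy2 (not_lt.2 (hν1 ▸ (T.lt_ht h1).le))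
    · subst hy
      rcases h2 with h2 | ⟨t', htl', hy', h2⟩ | ⟨t', htl', rfl, h2⟩
      · exact absurd (T.lt_mem h2).1 (hnm t)
      · have ht' : t = t' := newElem_inj (mem_levA.1 htl).1 (mem_levA.1 htl').1 hy'
        rcases h2 with rfl | h2
        · exact Or.inl (ht' ▸ h1)
        · exact Or.inl (T.lt_trans' (ht' ▸ h1) h2)
      · exact absurd (T.lt_mem h2).1 (hnm t)
  · -- lt_irrefl'
    intro x h
    rcases h with h | ⟨t, htl, rfl, h1⟩ | ⟨t, htl, rfl, h1⟩
    · exact T.lt_irrefl' x h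
    · rcases h1 with h1 | h1
      · exact hnm t (h1 ▸ (mem_levA.1 htl).1)
      · exact hnm t (T.lt_mem h1).2
    · exact hnm t (T.lt_mem h1).1
  · -- pred_linear
    intro x y z hy hz
    rcases hy with hy | ⟨t, htl, rfl, hy⟩ | ⟨t, htl, rfl, hy⟩
    · rcases hz with hz | ⟨t, htl, rfl, hz⟩ | ⟨t, htl, rfl, hz⟩
      · rcases T.pred_linear hy hz with h | h | h
        exacts [Or.inl (Or.inl h), Or.inr (Or.inl h), Or.inr (Or.inr (Or.inl h))]
      · rcases hz with rfl | hz
        · exact Or.inl (Or.inr (Or.inr ⟨t, htl, rfl, hy⟩))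
        · rcases T.pred_linear hy hz with h | h | h
          · exact Or.inl (Or.inr (Or.inr ⟨t, htl, rfl, h⟩))
          · exact Or.inr (Or.inr (Or.inr (Or.inl ⟨t, htl, rfl, Or.inl h.symm⟩)))
          · exact Or.inr (Or.inr (Or.inr (Or.inl ⟨t, htl, rfl, Or.inr h⟩)))
      · exact absurd (T.lt_mem hy).2 (hnm t)
    · rcases hz with hz | ⟨t', htl', rfl, hz⟩ | ⟨t', htl', rfl, hz⟩
      · rcases hy with rfl | hy
        · exact Or.inr (Or.inr (Or.inr (Or.inr ⟨t, htl, rfl, hz⟩)))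
        · rcases T.pred_linear hz hy with h | h | h
          · exact Or.inr (Or.inr (Or.inr (Or.inr ⟨t, htl, rfl, h⟩)))
          · exact Or.inl (Or.inr (Or.inl ⟨t, htl, rfl, Or.inl h.symm⟩))
          · exact Or.inl (Or.inr (Or.inl ⟨t, htl, rfl, Or.inr h⟩))
      · have hteq : t = t' := by
          rcases hy with rfl | hy
          · rcases hz with h' | hz
            · exact h'.symm
            · exfalso
              have h2 := T.lt_ht hz
              rw [(mem_levA.1 htl).2, (mem_levA.1 htl').2] at h2
              exact lt_irrefl _ h2
          · rcases hz with rfl | hz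
            · exfalso
              have h2 := T.lt_ht hy
              rw [(mem_levA.1 htl).2, (mem_levA.1 htl').2] at h2
              exact lt_irrefl _ h2
            · exact lt_eq_of_ht_eq hy hz
                (by rw [(mem_levA.1 htl).2, (mem_levA.1 htl').2])
        exact Or.inr (Or.inl (by rw [hteq]))
      · rcases hy with h | h
        · exact absurd (h ▸ (mem_levA.1 htl).1) (hnm t')
        · exact absurd (T.lt_mem h).2 (hnm t')
    · rcases hz with hz | ⟨t', htl', rfl, hz⟩ | ⟨t', htl', hx', hz⟩
      · exact absurd (T.lt_mem hz).2 (hnm t)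
      · rcases hz with h | h
        · exact absurd (h ▸ (mem_levA.1 htl').1) (hnm t)
        · exact absurd (T.lt_mem h).2 (hnm t)
      · have hteq := newElem_inj (mem_levA.1 htl).1 (mem_levA.1 htl').1 hx'
        have hz' : T.lt z t := by rw [hteq]; exact hz
        rcases T.pred_linear hy hz' with h | h | h
        exacts [Or.inl (Or.inl h), Or.inr (Or.inl h), Or.inr (Or.inr (Or.inl h))]
  · -- lt_ht
    intro x y h
    rcases h with h | ⟨t, htl, rfl, h⟩ | ⟨t, htl, rfl, h⟩
    · exact T.lt_ht h
    · rw [ht_newElem]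
      rcases h with rfl | h
      · rw [(mem_levA.1 htl).2]; exact hβν
      · exact lt_trans hβν ((mem_levA.1 htl).2 ▸ T.lt_ht h)
    · rw [ht_newElem]
      exact hF1 t htl x h
  · -- pred_level
    intro x hx α hocc hlt
    by_cases hα : α = β
    · subst hα
      rcases Finset.mem_union.1 hx with hxT | hxN
      · rcases ht_cases hxT with h0 | hh
        · rw [h0] at hlt; exact absurd hlt (not_lt.2 (zero_le (a := α)))
        · have hνle : T.minAbove α ≤ ht x := minAbove_le hh hlt
          rcases eq_or_lt_of_le hνle with heq | hltν
          · have hxl : x ∈ T.levA α := mem_levA.2 ⟨hxT, heq.symm⟩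
            exact ⟨T.newElem α x,
              Finset.mem_union_right _ (Finset.mem_image_of_mem _ hxl),
              ht_newElem α x, Or.inr (Or.inl ⟨x, hxl, rfl, Or.inl rfl⟩)⟩
          · obtain ⟨y, hy, hyh, hylt⟩ :=
              T.pred_level x hxT (T.minAbove α) ⟨hν.1.2.choose, hν.1.2.choose_spec⟩ hltν
            have hyl : y ∈ T.levA α := mem_levA.2 ⟨hy, hyh⟩
            exact ⟨T.newElem α y,
              Finset.mem_union_right _ (Finset.mem_image_of_mem _ hyl),
              ht_newElem α y, Or.inr (Or.inl ⟨y, hyl, rfl, Or.inr hylt⟩)⟩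
      · obtain ⟨t, htl, rfl⟩ := Finset.mem_image.1 hxN
        rw [ht_newElem] at hlt
        exact absurd hlt (lt_irrefl α)
    · obtain ⟨z, hz, hzh⟩ := hocc
      have hzT : z ∈ T.elems := by
        rcases Finset.mem_union.1 hz with h | h
        · exact h
        · exfalso
          obtain ⟨t, _, rfl⟩ := Finset.mem_image.1 h
          rw [ht_newElem] at hzh
          exact hα hzh.symm
      rcases Finset.mem_union.1 hx with hxT | hxN
      · obtain ⟨y, hy, h1, h2⟩ := T.pred_level x hxT α ⟨z, hzT, hzh⟩ hlt
        exact ⟨y, Finset.mem_union_left _ hy, h1, Or.inl h2⟩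
      · obtain ⟨t, htl, rfl⟩ := Finset.mem_image.1 hxN
        rw [ht_newElem] at hlt
        have hαt : α < ht t := by rw [(mem_levA.1 htl).2]; exact hlt.trans hβν
        obtain ⟨y, hy, h1, h2⟩ := T.pred_level t (mem_levA.1 htl).1 α ⟨z, hzT, hzh⟩ hαt
        exact ⟨y, Finset.mem_union_left _ hy, h1, Or.inr (Or.inr ⟨t, htl, rfl, h2⟩)⟩
  · -- SimpleExt
    refine ⟨⟨?_, ?_⟩, ?_, ?_⟩
    · intro x hx
      exact Finset.mem_coe.2 (Finset.mem_union_left _ (Finset.mem_coe.1 hx))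
    · intro x y h
      exact Or.inl h
    · intro x hxU hxT
      rcases Finset.mem_union.1 hxU with h | h
      · exact absurd h hxT
      · obtain ⟨t, _, rfl⟩ := Finset.mem_image.1 h
        rw [ht_newElem]
        exact hβT
    · intro α hα1 hα2 hα3
      have hαβ : α = β := by
        obtain ⟨hα0, z, hz, hzh⟩ := hα1
        rcases Finset.mem_union.1 hz with h | h
        · exact absurd ⟨hα0, z, h, hzh⟩ hα2
        · obtain ⟨t, _, rfl⟩ := Finset.mem_image.1 h
          rw [ht_newElem] at hzh
          exact hzh.symm
      subst hαβ
      intro a hal b hbl hdrop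
      have haL : a ∈ T.levA α := mem_levA.2 ⟨hal.1, hal.2⟩
      have hbL : b ∈ T.levA α := mem_levA.2 ⟨hbl.1, hbl.2⟩
      rw [drop_eq (Finset.mem_union_right _ (Finset.mem_image_of_mem _ haL))
          (ht_newElem α a) (Or.inr (Or.inl ⟨a, haL, rfl, Or.inl rfl⟩)),
        drop_eq (Finset.mem_union_right _ (Finset.mem_image_of_mem _ hbL))
          (ht_newElem α b) (Or.inr (Or.inl ⟨b, hbL, rfl, Or.inl rfl⟩))] at hdrop
      exact newElem_inj hal.1 hbl.1 hdrop
  · -- heights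
    ext α
    simp only [heights, Set.mem_setOf_eq, Set.mem_union, Set.mem_singleton_iff]
    constructor
    · rintro ⟨hα0, z, hz, hzh⟩
      rcases Finset.mem_union.1 hz with h | h
      · exact Or.inl ⟨hα0, z, h, hzh⟩
      · obtain ⟨t, _, rfl⟩ := Finset.mem_image.1 h
        rw [ht_newElem] at hzh
        exact Or.inr hzh.symm
    · rintro (⟨hα0, z, hz, hzh⟩ | rfl)
      · exact ⟨hα0, z, Finset.mem_union_left _ hz, hzh⟩
      · obtain ⟨zν, hzν, hzνh⟩ := hν.1.2
        exact ⟨hβ0, T.newElem α zν,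
          Finset.mem_union_right _ (Finset.mem_image_of_mem _ (mem_levA.2 ⟨hzν, hzνh⟩)),
          ht_newElem α zν⟩

end SFT
end AKST
namespace AKST
namespace SFT

variable {T : SFT}

def ltB (T : SFT) (β t0 : Ordinal) (x y : Ordinal) : Prop :=
  T.lt x y ∨ (y = Ordinal.omega0 * β ∧ T.le x t0)

lemma stepB (T : SFT) {β : Ordinal} (hβ0 : β ≠ 0) (hβ1 : β < ω1) (hβT : β ∉ T.heights)
    (hcase : ¬ ∃ γ ∈ T.heights, β < γ) :
    ∃ T' : SFT, SimpleExt T' T ∧ T'.heights = T.heights ∪ {β} := by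
  obtain ⟨t0, ht0m, ht0max⟩ := T.elems.exists_max_image ht ⟨0, T.zero_mem⟩
  have hhtp : ht (Ordinal.omega0 * β) = β := by simpa using ht_mul_add β 0
  have hpne : Ordinal.omega0 * β ≠ 0 := by simpa using mul_add_ne_zero hβ0 0
  have hpT : Ordinal.omega0 * β ∉ T.elems := fun h => hβT (hhtp ▸ ht_mem_heights h hpne)
  have hle_mem : ∀ {x}, T.le x t0 → x ∈ T.elems := by
    rintro x (h | ⟨rfl, h⟩)
    · exact (T.lt_mem h).1
    · exact h
  have htlt : ∀ {x}, x ∈ T.elems → ht x < β := by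
    intro x hx
    rcases ht_cases hx with h0 | hh
    · rw [h0]; exact pos_iff_ne_zero.2 hβ0
    · rcases lt_trichotomy (ht x) β with h | h | h
      · exact h
      · exact absurd (h ▸ hh) hβT
      · exact absurd ⟨ht x, hh, h⟩ hcase
  refine ⟨{ elems := insert (Ordinal.omega0 * β) T.elems
            lt := T.ltB β t0
            zero_mem := Finset.mem_insert_of_mem T.zero_mem
            mem_ok := ?_
            lt_mem := ?_
            lt_trans' := ?_
            lt_irrefl' := ?_
            pred_linear := ?_
            lt_ht := ?_
            pred_level := ?_ }, ?_, ?_⟩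
  · intro x hx
    rcases Finset.mem_insert.1 hx with rfl | h
    · exact Or.inr ⟨by simpa using omega0_le_mul_add hβ0 0, by simpa using mul_add_lt_ω1 hβ1 0⟩
    · exact T.mem_ok x h
  · rintro x y (h | ⟨rfl, h⟩)
    · exact ⟨Finset.mem_insert_of_mem (T.lt_mem h).1, Finset.mem_insert_of_mem (T.lt_mem h).2⟩
    · exact ⟨Finset.mem_insert_of_mem (hle_mem h), Finset.mem_insert_self _ _⟩
  · rintro x y z (h1 | ⟨rfl, h1⟩) h2
    · rcases h2 with h2 | ⟨rfl, h2⟩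
      · exact Or.inl (T.lt_trans' h1 h2)
      · refine Or.inr ⟨rfl, ?_⟩
        rcases h2 with h2 | ⟨rfl, _⟩
        · exact Or.inl (T.lt_trans' h1 h2)
        · exact Or.inl h1
    · rcases h2 with h2 | ⟨heq, h2⟩
      · exact absurd (T.lt_mem h2).1 hpT
      · exact absurd (hle_mem h2) hpT
  · rintro x (h | ⟨rfl, h⟩)
    · exact T.lt_irrefl' x h
    · exact hpT (hle_mem h)
  · intro x y z hy hz
    rcases hy with hy | ⟨rfl, hy⟩
    · rcases hz with hz | ⟨rfl, hz⟩
      · rcases T.pred_linear hy hz with h | h | h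
        exacts [Or.inl (Or.inl h), Or.inr (Or.inl h), Or.inr (Or.inr (Or.inl h))]
      · exact absurd (T.lt_mem hy).2 hpT
    · rcases hz with hz | ⟨heq, hz⟩
      · exact absurd (T.lt_mem hz).2 hpT
      · rcases hy with hy | ⟨rfl, _⟩
        · rcases hz with hz | ⟨rfl, _⟩
          · rcases T.pred_linear hy hz with h | h | h
            exacts [Or.inl (Or.inl h), Or.inr (Or.inl h), Or.inr (Or.inr (Or.inl h))]
          · exact Or.inl (Or.inl hy)
        · rcases hz with hz | ⟨rfl, _⟩
          · exact Or.inr (Or.inr (Or.inl hz))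
          · exact Or.inr (Or.inl rfl)
  · rintro x y (h | ⟨rfl, h⟩)
    · exact T.lt_ht h
    · rw [hhtp]
      exact htlt (hle_mem h)
  · intro x hx α hocc hlt
    obtain ⟨z, hz, hzh⟩ := hocc
    rcases Finset.mem_insert.1 hx with rfl | hxT
    · rw [hhtp] at hlt
      have hzT : z ∈ T.elems := by
        rcases Finset.mem_insert.1 hz with rfl | h
        · rw [hhtp] at hzh
          exact absurd (hzh ▸ hlt) (lt_irrefl _)
        · exact h
      have hαle : α ≤ ht t0 := hzh ▸ ht0max z hzT
      rcases eq_or_lt_of_le hαle with heq | hltα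
      · exact ⟨t0, Finset.mem_insert_of_mem ht0m, heq.symm, Or.inr ⟨rfl, Or.inr ⟨rfl, ht0m⟩⟩⟩
      · obtain ⟨y, hy, h1, h2⟩ := T.pred_level t0 ht0m α ⟨z, hzT, hzh⟩ hltα
        exact ⟨y, Finset.mem_insert_of_mem hy, h1, Or.inr ⟨rfl, Or.inl h2⟩⟩
    · have hzT : z ∈ T.elems := by
        rcases Finset.mem_insert.1 hz with rfl | h
        · rw [hhtp] at hzh
          rw [← hzh] at hlt
          exact absurd hlt (not_lt.2 (htlt hxT).le)
        · exact h
      obtain ⟨y, hy, h1, h2⟩ := T.pred_level x hxT α ⟨z, hzT, hzh⟩ hlt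
      exact ⟨y, Finset.mem_insert_of_mem hy, h1, Or.inl h2⟩
  · refine ⟨⟨?_, ?_⟩, ?_, ?_⟩
    · intro x hx
      exact Finset.mem_coe.2 (Finset.mem_insert_of_mem (Finset.mem_coe.1 hx))
    · intro x y h
      exact Or.inl h
    · intro x hxU hxT
      rcases Finset.mem_insert.1 hxU with rfl | h
      · rw [hhtp]; exact hβT
      · exact absurd h hxT
    · intro α hα1 hα2 hα3
      exfalso
      have hmax : T.maxHeight ≤ β := maxHeight_le (fun γ hγ => not_lt.1 (fun h => hcase ⟨γ, hγ, h⟩))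
      obtain ⟨hα0, z, hz, hzh⟩ := hα1
      rcases Finset.mem_insert.1 hz with rfl | h
      · rw [hhtp] at hzh
        rw [← hzh] at hα3
        exact absurd hα3 (not_lt.2 hmax)
      · exact hα2 ⟨hα0, z, h, hzh⟩
  · ext α
    simp only [heights, Set.mem_setOf_eq, Set.mem_union, Set.mem_singleton_iff]
    constructor
    · rintro ⟨hα0, z, hz, hzh⟩
      rcases Finset.mem_insert.1 hz with rfl | h
      · rw [hhtp] at hzh
        exact Or.inr hzh.symm
      · exact Or.inl ⟨hα0, z, h, hzh⟩
    · rintro (⟨hα0, z, hz, hzh⟩ | rfl)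
      · exact ⟨hα0, z, Finset.mem_insert_of_mem hz, hzh⟩
      · exact ⟨hβ0, _, Finset.mem_insert_self _ _, hhtp⟩

lemma step (T : SFT) {β : Ordinal} (hβ0 : β ≠ 0) (hβ1 : β < ω1) (hβT : β ∉ T.heights) :
    ∃ T' : SFT, SimpleExt T' T ∧ T'.heights = T.heights ∪ {β} := by
  by_cases hcase : ∃ γ ∈ T.heights, β < γ
  · exact T.stepA hβ0 hβ1 hβT hcase
  · exact T.stepB hβ0 hβ1 hβT hcase

end SFT
end AKST
namespace AKST
namespace SFT

lemma comp {T T' U : SFT} {β : Ordinal} (hβ : β ∉ T.heights)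
    (h1 : SimpleExt T' T) (hH : T'.heights = T.heights ∪ {β})
    (h2 : SimpleExt U T') : SimpleExt U T := by
  have hβT' : β ∈ T'.heights := by rw [hH]; exact Or.inr rfl
  have hTT' : T.heights ⊆ T'.heights := by rw [hH]; exact Set.subset_union_left
  refine ⟨⟨fun _ hx => h2.1.1 (h1.1.1 hx), fun h => h2.1.2 (h1.1.2 h)⟩, ?_, ?_⟩
  · intro x hxU hxT
    by_cases hx' : x ∈ T'.elems
    · exact h1.2.1 x hx' hxT
    · exact fun h => h2.2.1 x hxU hx' (hTT' h)
  · intro α hαU hαT hαmax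
    have hex : ∃ γ ∈ T.heights, α < γ := exists_gt_of_lt_maxHeight hαmax
    obtain ⟨hνmem, hαν⟩ := minAbove_spec hex
    have hTne : T.heights.Nonempty := ⟨T.minAbove α, hνmem⟩
    intro t htl t' htl' hdrop
    have ht1 : t ∈ T.elems := htl.1
    have ht2 : ht t = T.minAbove α := htl.2
    have ht1' : t' ∈ T.elems := htl'.1
    have ht2' : ht t' = T.minAbove α := htl'.2
    have hoccβ' : ∃ z ∈ T'.elems, ht z = β := ⟨hβT'.2.choose, hβT'.2.choose_spec⟩
    by_cases hαβ : α = β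
    · subst hαβ
      obtain ⟨y, hy, hyh, hylt⟩ :=
        T'.pred_level t (h1.1.1 ht1) α hoccβ' (ht2 ▸ hαν)
      obtain ⟨y', hy', hyh', hylt'⟩ :=
        T'.pred_level t' (h1.1.1 ht1') α hoccβ' (ht2' ▸ hαν)
      rw [drop_eq (h2.1.1 hy) hyh (h2.1.2 hylt),
        drop_eq (h2.1.1 hy') hyh' (h2.1.2 hylt')] at hdrop
      subst hdrop
      exact h1.2.2 α hβT' hβ hαmax t htl t' htl'
        (by rw [drop_eq hy hyh hylt, drop_eq hy' hyh' hylt'])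
    · have hαT' : α ∉ T'.heights := by
        rw [hH]
        rintro (h | h)
        · exact hαT h
        · exact hαβ h
      have hαmax' : α < T'.maxHeight :=
        lt_of_lt_of_le hαmax
          (csSup_le_csSup (heights_finite T').bddAbove hTne (hH ▸ Set.subset_union_left))
      have hud := h2.2.2 α hαU hαT' hαmax'
      by_cases hmid : α < β ∧ β < T.minAbove α
      · have hm' : T'.minAbove α = β :=
          le_antisymm (minAbove_le hβT' hmid.1)
            (le_csInf ⟨β, hβT', hmid.1⟩ (by
              rintro b ⟨hb1, hb2⟩
              rw [hH] at hb1
              rcases hb1 with hb1 | hb1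
              · exact le_of_lt (lt_of_lt_of_le hmid.2 (minAbove_le hb1 hb2))
              · exact le_of_eq hb1.symm))
        obtain ⟨y, hy, hyh, hylt⟩ :=
          T'.pred_level t (h1.1.1 ht1) β hoccβ' (ht2 ▸ hmid.2)
        obtain ⟨y', hy', hyh', hylt'⟩ :=
          T'.pred_level t' (h1.1.1 ht1') β hoccβ' (ht2' ▸ hmid.2)
        have hoccα : ∃ z ∈ U.elems, ht z = α := ⟨hαU.2.choose, hαU.2.choose_spec⟩
        obtain ⟨d, hd, hdh, hdlt⟩ :=
          U.pred_level y (h2.1.1 hy) α hoccα (hyh ▸ hmid.1)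
        obtain ⟨d', hd', hdh', hdlt'⟩ :=
          U.pred_level y' (h2.1.1 hy') α hoccα (hyh' ▸ hmid.1)
        rw [drop_eq hd hdh (U.lt_trans' hdlt (h2.1.2 hylt)),
          drop_eq hd' hdh' (U.lt_trans' hdlt' (h2.1.2 hylt'))] at hdrop
        subst hdrop
        have hyy : y = y' := by
          refine hud y ?_ y' ?_ ?_
          · rw [hm']; exact ⟨hy, hyh⟩
          · rw [hm']; exact ⟨hy', hyh'⟩
          · rw [drop_eq hd hdh hdlt, drop_eq hd' hdh' hdlt']
        subst hyy
        have hmβ : T.minAbove β = T.minAbove α :=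
          le_antisymm (minAbove_le hνmem hmid.2)
            (le_csInf ⟨T.minAbove β, (minAbove_spec ⟨T.minAbove α, hνmem, hmid.2⟩).1,
                (minAbove_spec ⟨T.minAbove α, hνmem, hmid.2⟩).2⟩
              (fun b hb => minAbove_le hb.1 (hmid.1.trans hb.2)))
        refine h1.2.2 β hβT' hβ (lt_of_lt_of_le hmid.2 (le_maxHeight hνmem)) t ?_ t' ?_ ?_
        · rw [hmβ]; exact htl
        · rw [hmβ]; exact htl'
        · rw [drop_eq hy hyh hylt, drop_eq hy hyh' hylt']
      · have hm' : T'.minAbove α = T.minAbove α :=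
          le_antisymm (minAbove_le (hTT' hνmem) hαν)
            (le_csInf ⟨T.minAbove α, hTT' hνmem, hαν⟩ (by
              rintro b ⟨hb1, hb2⟩
              rw [hH] at hb1
              rcases hb1 with hb1 | hb1
              · exact minAbove_le hb1 hb2
              · subst hb1
                exact not_lt.1 (fun h => hmid ⟨hb2, h⟩)))
        refine hud t ?_ t' ?_ hdrop
        · rw [hm']
          exact ⟨h1.1.1 ht1, ht2⟩
        · rw [hm']
          exact ⟨h1.1.1 ht1', ht2'⟩

end SFT
end AKST

namespace AKST

open SFT in
lemma main_aux : ∀ n : ℕ, ∀ T : SFT, ∀ B : Finset Ordinal,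
    (∀ β ∈ B, β ≠ 0 ∧ β < ω1) → T.heights ⊆ ↑B →
    (B.filter (fun b => b ∉ T.heights)).card = n →
    ∃ U : SFT, SimpleExt U T ∧ U.heights = ↑B := by
  intro n
  induction n with
  | zero =>
    intro T B hB hTB hcard
    refine ⟨T, simpleExt_refl T, ?_⟩
    refine Set.Subset.antisymm hTB (fun b hb => ?_)
    by_contra hc
    have hmem : b ∈ B.filter (fun b => b ∉ T.heights) := Finset.mem_filter.2 ⟨hb, hc⟩
    rw [Finset.card_eq_zero] at hcard
    rw [hcard] at hmem
    exact absurd hmem (Finset.notMem_empty b)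
  | succ n ih =>
    intro T B hB hTB hcard
    have hne : (B.filter (fun b => b ∉ T.heights)).Nonempty :=
      Finset.card_pos.1 (hcard ▸ n.succ_pos)
    obtain ⟨β, hβf⟩ := hne
    obtain ⟨hβB, hβT⟩ := Finset.mem_filter.1 hβf
    obtain ⟨T', hTT', hH⟩ := T.step (hB β hβB).1 (hB β hβB).2 hβT
    have hTB' : T'.heights ⊆ ↑B := by
      rw [hH]
      rintro b (h | h)
      · exact hTB h
      · rw [h]; exact hβB
    have hcard' : (B.filter (fun b => b ∉ T'.heights)).card = n := by
      have heq : B.filter (fun b => b ∉ T'.heights)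
          = (B.filter (fun b => b ∉ T.heights)).erase β := by
        ext b
        simp only [Finset.mem_filter, Finset.mem_erase, hH, Set.mem_union,
          Set.mem_singleton_iff, not_or]
        tauto
      rw [heq, Finset.card_erase_of_mem hβf, hcard]
      rfl
    obtain ⟨U, hU1, hU2⟩ := ih T' B hB hTB' hcard'
    exact ⟨U, comp hβT hTT' hH hU1, hU2⟩

end AKST

/-- Every standard finite tree has a simple extension with any prescribed
finite set of heights `B ⊆ ω₁ \ {0}` containing `ht[T]`. -/
theorem stmt_4 (T : SFT) (B : Finset Ordinal)
    (hB : ∀ β ∈ B, β ≠ 0 ∧ β < ω1) (hTB : T.heights ⊆ ↑B) :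
    ∃ U : SFT, SimpleExt U T ∧ U.heights = ↑B :=
  main_aux _ T B hB hTB rfl
end
end

section
/- Let T be a standard finite tree and let f ⊆ T ⊗ T be downwards closed. Then f is a strictly increasing function if and only if for all pairs (a₀,b₀) and (a₁,b₁) in f, ht(a₀ ∧ a₁) ≤ ht(b₀ ∧ b₁). -/
noncomputable section
open scoped Classical

open AKST AKST.SFT

namespace AKST
namespace SFT

lemma ht_zero' : ht (0 : Ordinal) = 0 := by
  simp [ht, Ordinal.zero_div]

lemma eq_zero_of_ht_zero (T : SFT) {x : Ordinal} (hx : x ∈ T.elems) (h : ht x = 0) : x = 0 := by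
  rcases T.mem_ok x hx with h0 | ⟨hω, _⟩
  · exact h0
  · exfalso
    have : (0 : Ordinal) < x / Ordinal.omega0 :=
      (Ordinal.div_pos Ordinal.omega0_ne_zero).2 hω
    rw [show x / Ordinal.omega0 = ht x from rfl, h] at this
    exact lt_irrefl _ this

lemma le_mem_left (T : SFT) {x y : Ordinal} (h : T.le x y) : x ∈ T.elems := by
  rcases h with h | ⟨_, h⟩
  · exact (T.lt_mem h).1
  · exact h

lemma ht_le_of_le (T : SFT) {x y : Ordinal} (h : T.le x y) : ht x ≤ ht y := by
  rcases h with h | ⟨rfl, _⟩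
  · exact (T.lt_ht h).le
  · exact le_rfl

lemma eq_of_le_of_ht_le (T : SFT) {x y : Ordinal} (h : T.le x y) (hh : ht y ≤ ht x) : x = y := by
  rcases h with h | ⟨rfl, _⟩
  · exact absurd (T.lt_ht h) (not_lt.2 hh)
  · rfl

lemma le_antisymm'' (T : SFT) {x y : Ordinal} (h : T.le x y) (h' : T.le y x) : x = y :=
  T.eq_of_le_of_ht_le h (T.ht_le_of_le h')

lemma zero_le' (T : SFT) {x : Ordinal} (hx : x ∈ T.elems) : T.le 0 x := by
  by_cases h0 : x = 0
  · exact Or.inr ⟨h0.symm, T.zero_mem⟩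
  · have hpos : 0 < ht x := by
      rcases eq_zero_or_pos (ht x) with h | h
      · exact absurd (T.eq_zero_of_ht_zero hx h) h0
      · exact h
    obtain ⟨y, hy, hy0, hylt⟩ := T.pred_level x hx 0 ⟨0, T.zero_mem, ht_zero'⟩ hpos
    rw [T.eq_zero_of_ht_zero hy hy0] at hylt
    exact Or.inl hylt

lemma exists_isMeet (T : SFT) {x y : Ordinal} (hx : x ∈ T.elems) (hy : y ∈ T.elems) :
    ∃ z, T.isMeet x y z := by
  classical
  set L : Finset Ordinal := T.elems.filter (fun z => T.le z x ∧ T.le z y) with hL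
  have hne : L.Nonempty := ⟨0, by
    simp only [hL, Finset.mem_filter]
    exact ⟨T.zero_mem, T.zero_le' hx, T.zero_le' hy⟩⟩
  obtain ⟨z, hzL, hzmax⟩ := L.exists_max_image ht hne
  simp only [hL, Finset.mem_filter] at hzL
  refine ⟨z, hzL.2.1, hzL.2.2, ?_⟩
  intro w hwx hwy
  have hwL : w ∈ L := by
    simp only [hL, Finset.mem_filter]
    exact ⟨T.le_mem_left hwx, hwx, hwy⟩
  have hht : ht w ≤ ht z := hzmax w hwL
  -- w and z are both below x; compare them
  rcases hwx with hwx | ⟨rfl, _⟩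
  · rcases hzL.2.1 with hzx | ⟨rfl, _⟩
    · rcases T.pred_linear hwx hzx with h | h | h
      · exact Or.inl h
      · exact Or.inr ⟨h, T.le_mem_left (Or.inl hwx)⟩
      · exact absurd (T.lt_ht h) (not_lt.2 hht)
    · exact Or.inl hwx
  · -- w = x
    have : ht z ≤ ht w := T.ht_le_of_le hzL.2.1
    have hzw : z = w := T.eq_of_le_of_ht_le hzL.2.1 hht
    exact Or.inr ⟨hzw.symm, T.le_mem_left hwy⟩

lemma isMeet_unique (T : SFT) {x y z z' : Ordinal} (h : T.isMeet x y z)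
    (h' : T.isMeet x y z') : z = z' :=
  T.le_antisymm'' (h'.2.2 z h.1 h.2.1) (h.2.2 z' h'.1 h'.2.1)

lemma meet_eq_of_isMeet (T : SFT) {x y z : Ordinal} (h : T.isMeet x y z) : T.meet x y = z := by
  have he : ∃ z, T.isMeet x y z := ⟨z, h⟩
  rw [SFT.meet, dif_pos he]
  exact T.isMeet_unique he.choose_spec h

lemma meet_isMeet (T : SFT) {x y : Ordinal} (hx : x ∈ T.elems) (hy : y ∈ T.elems) :
    T.isMeet x y (T.meet x y) := by
  obtain ⟨z, hz⟩ := T.exists_isMeet hx hy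
  rw [T.meet_eq_of_isMeet hz]
  exact hz

end SFT
end AKST

/-- For `f ⊆ T ⊗ T` downwards closed, `f` is a strictly increasing function
iff for all `(a₀,b₀), (a₁,b₁) ∈ f`, `ht(a₀ ∧ a₁) ≤ ht(b₀ ∧ b₁)`. -/
theorem stmt_6 (T : SFT) (f : Set (Ordinal × Ordinal))
    (hsub : ∀ p ∈ f, InOtimes T p) (hdc : DCPairs T f) :
    (FuncGraph f ∧ StrictIncr T f) ↔
      (∀ a₀ b₀ a₁ b₁, (a₀, b₀) ∈ f → (a₁, b₁) ∈ f →
        ht (T.meet a₀ a₁) ≤ ht (T.meet b₀ b₁)) := by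
  -- helper: drop a pair down along the first coordinate
  have drop_pair : ∀ {a b z : Ordinal}, (a, b) ∈ f → T.le z a →
      ∃ d, ht d = ht z ∧ T.le d b ∧ (z, d) ∈ f := by
    intro a b z hab hza
    obtain ⟨ha, hb, hab'⟩ := hsub _ hab
    rcases hza with hlt | ⟨rfl, _⟩
    · have hz : z ∈ T.elems := (T.lt_mem hlt).1
      have hhz : ht z < ht b := hab' ▸ T.lt_ht hlt
      obtain ⟨d, hd, hdht, hdlt⟩ := T.pred_level b hb (ht z) ⟨z, hz, rfl⟩ hhz
      refine ⟨d, hdht, Or.inl hdlt, ?_⟩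
      exact hdc _ hab (z, d) ⟨hz, hd, hdht.symm⟩ (Or.inl hlt) (Or.inl hdlt)
    · exact ⟨b, hab'.symm, Or.inr ⟨rfl, hb⟩, hab⟩
  constructor
  · rintro ⟨hfun, _⟩ a₀ b₀ a₁ b₁ h0 h1
    obtain ⟨ha0, hb0, he0⟩ := hsub _ h0
    obtain ⟨ha1, hb1, he1⟩ := hsub _ h1
    have hc := T.meet_isMeet ha0 ha1
    set c := T.meet a₀ a₁ with hcdef
    obtain ⟨d₀, hd₀ht, hd₀le, hd₀f⟩ := drop_pair h0 hc.1
    obtain ⟨d₁, hd₁ht, hd₁le, hd₁f⟩ := drop_pair h1 hc.2.1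
    have hdd : d₀ = d₁ := hfun hd₀f hd₁f
    have hm := T.meet_isMeet hb0 hb1
    have : T.le d₀ (T.meet b₀ b₁) := hm.2.2 d₀ hd₀le (hdd ▸ hd₁le)
    calc ht c = ht d₀ := hd₀ht.symm
      _ ≤ ht (T.meet b₀ b₁) := T.ht_le_of_le this
  · intro h
    constructor
    · intro x y y' hxy hxy'
      obtain ⟨hx, hy, hexy⟩ := hsub _ hxy
      obtain ⟨_, hy', hexy'⟩ := hsub _ hxy'
      have hxx : T.meet x x = x :=
        T.meet_eq_of_isMeet ⟨Or.inr ⟨rfl, hx⟩, Or.inr ⟨rfl, hx⟩, fun w h1 _ => h1⟩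
      have hle := h x y x y' hxy hxy'
      rw [hxx] at hle
      have hm := T.meet_isMeet hy hy'
      have h1 : ht y ≤ ht (T.meet y y') := hexy ▸ hle
      have h2 : ht y' ≤ ht (T.meet y y') := hexy' ▸ hle
      have e1 : T.meet y y' = y := T.eq_of_le_of_ht_le hm.1 h1
      have e2 : T.meet y y' = y' := T.eq_of_le_of_ht_le hm.2.1 h2
      rw [← e1, e2]
    · intro x y x' y' hxy hx'y' hlt
      obtain ⟨hx, hy, hexy⟩ := hsub _ hxy
      obtain ⟨hx', hy', hexy'⟩ := hsub _ hx'y'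
      have hxx : T.meet x x' = x :=
        T.meet_eq_of_isMeet ⟨Or.inr ⟨rfl, hx⟩, Or.inl hlt, fun w h1 _ => h1⟩
      have hle := h x y x' y' hxy hx'y'
      rw [hxx] at hle
      have hm := T.meet_isMeet hy hy'
      have h1 : ht y ≤ ht (T.meet y y') := hexy ▸ hle
      have e1 : T.meet y y' = y := T.eq_of_le_of_ht_le hm.1 h1
      have hyy' : T.le y y' := e1 ▸ hm.2.1
      rcases hyy' with hyy' | ⟨heq, _⟩
      · exact hyy'
      · exfalso
        have : ht x < ht x' := T.lt_ht hlt
        rw [hexy, hexy', heq] at this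
        exact lt_irrefl _ this
end
end
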